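/- With the universal-bus Hamiltonian H = (1/τ) Σ_n ε_n |v_n⟩⟨v_n| on ℂ^d, where ε_n = -2πn/d + 2πx_n and x_n = c + n + (d-1)f(n) for some constant c ∈ ℤ and arbitrary function f : {0,...,d-1} → ℤ, the evolution U(t) = exp(-iHt) satisfies |⟨m|U(τ_m)|0⟩| = 1 for every m ∈ {1,...,d-1}, where τ_m = mτ/(d-1). That is, the excitation is perfectly transferred from node 0 to node m at time τ_m. -/

import Mathlib

/-- For the universal-bus Hamiltonian `H = (1/τ) Σ_n ε_n |v_n⟩⟨v_n|` on `ℂ^d`, with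
`ε_n = -2πn/d + 2π x_n` and `x_n = c + n + (d-1) f(n)` (`c ∈ ℤ`, `f : Fin d → ℤ`), the
evolution `U(t) = Σ_n e^{-iε_n t/τ}|v_n⟩⟨v_n|` satisfies `|⟨m|U(τ_m)|0⟩| = 1` for every
`m ∈ {1,…,d-1}`, where `τ_m = mτ/(d-1)`: the excitation is perfectly transferred from node
`0` to node `m` at time `τ_m`. -/
theorem stmt_11 {d : ℕ} [NeZero d] (hd : 2 ≤ d)
    (τ : ℝ) (hτ : 0 < τ) (c : ℤ) (f : Fin d → ℤ)
    (v : Fin d → (Fin d → ℂ))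
    (hv : ∀ n k : Fin d,
      v n k = (1 / Real.sqrt d : ℝ) *
        Complex.exp (2 * Real.pi * Complex.I * (n.val : ℂ) * (k.val : ℂ) / (d : ℂ)))
    (ε : Fin d → ℝ)
    (hε : ∀ n : Fin d, ε n =
      -(2 * Real.pi * (n.val : ℝ) / d) +
        2 * Real.pi * ((c : ℝ) + (n.val : ℝ) + ((d : ℝ) - 1) * (f n : ℝ)))
    (U : ℝ → Matrix (Fin d) (Fin d) ℂ)
    (hU : ∀ t : ℝ, U t = ∑ n : Fin d,
      Complex.exp (-(Complex.I * ((ε n : ℂ)) * (t : ℂ) / (τ : ℂ))) •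
        Matrix.vecMulVec (v n) (star (v n))) :
    ∀ m : Fin d, m ≠ 0 →
      ‖(dotProduct (star (Pi.single m (1 : ℂ)))
        ((U ((m.val : ℝ) * τ / ((d : ℝ) - 1))).mulVec (Pi.single 0 1)))‖ = 1 := by
  intro m hm
  have hdR : (1:ℝ) < (d:ℝ) := by exact_mod_cast Nat.lt_of_lt_of_le one_lt_two hd
  have hd1R : (d:ℝ) - 1 ≠ 0 := by linarith
  have hdC : (d:ℂ) ≠ 0 := by exact_mod_cast (Nat.cast_ne_zero (R := ℂ)).2 (NeZero.ne d)
  have hd1C : (d:ℂ) - 1 ≠ 0 := by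
    intro h
    apply hd1R
    have := congrArg Complex.re h
    simpa using this
  have hτC : (τ:ℂ) ≠ 0 := Complex.ofReal_ne_zero.2 hτ.ne'
  have hsd : (Real.sqrt d : ℂ) * (Real.sqrt d : ℂ) = (d : ℂ) := by
    rw [← Complex.ofReal_mul, Real.mul_self_sqrt (by positivity)]; norm_cast
  set r : ℝ := -(2 * Real.pi * m.val * c / ((d:ℝ) - 1)) with hr
  set t : ℝ := (m.val : ℝ) * τ / ((d:ℝ) - 1) with ht
  have key : ∀ n : Fin d,
      Complex.exp (-(Complex.I * ((ε n : ℂ)) * (t : ℂ) / (τ : ℂ))) *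
        (v n m * (starRingEnd ℂ) (v n 0)) = (1 / d : ℂ) * Complex.exp ((r:ℂ) * Complex.I) := by
    intro n
    rw [hv n m, hv n 0, hε n]
    simp only [Fin.val_zero, Nat.cast_zero, mul_zero, zero_div, Complex.exp_zero, mul_one,
      Complex.conj_ofReal]
    have hA : Complex.exp (-(Complex.I * ((-(2 * Real.pi * (n.val:ℝ) / d) +
          2 * Real.pi * ((c:ℝ) + (n.val:ℝ) + ((d:ℝ) - 1) * (f n : ℝ)) : ℝ) : ℂ) * (t:ℂ) / (τ:ℂ))) *
        Complex.exp (2 * (Real.pi:ℂ) * Complex.I * (n.val:ℂ) * (m.val:ℂ) / (d:ℂ)) =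
        Complex.exp ((r:ℂ) * Complex.I) := by
      rw [← Complex.exp_add]
      have : -(Complex.I * ((-(2 * Real.pi * (n.val:ℝ) / d) +
          2 * Real.pi * ((c:ℝ) + (n.val:ℝ) + ((d:ℝ) - 1) * (f n : ℝ)) : ℝ) : ℂ) * (t:ℂ) / (τ:ℂ)) +
          2 * (Real.pi:ℂ) * Complex.I * (n.val:ℂ) * (m.val:ℂ) / (d:ℂ) =
          (r:ℂ) * Complex.I + (-((m.val:ℤ) * f n) : ℤ) * (2 * (Real.pi:ℂ) * Complex.I) := by
        rw [ht, hr]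
        push_cast
        field_simp
        ring
      rw [this, Complex.exp_add, Complex.exp_int_mul_two_pi_mul_I, mul_one]
    calc Complex.exp (-(Complex.I * ((-(2 * Real.pi * (n.val:ℝ) / d) +
          2 * Real.pi * ((c:ℝ) + (n.val:ℝ) + ((d:ℝ) - 1) * (f n : ℝ)) : ℝ) : ℂ) * (t:ℂ) / (τ:ℂ))) *
        (((1 / Real.sqrt d : ℝ) : ℂ) * Complex.exp (2 * (Real.pi:ℂ) * Complex.I * (n.val:ℂ) * (m.val:ℂ) / (d:ℂ)) *
          ((1 / Real.sqrt d : ℝ) : ℂ))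
        = (((1 / Real.sqrt d : ℝ) : ℂ) * ((1 / Real.sqrt d : ℝ) : ℂ)) *
          (Complex.exp (-(Complex.I * ((-(2 * Real.pi * (n.val:ℝ) / d) +
            2 * Real.pi * ((c:ℝ) + (n.val:ℝ) + ((d:ℝ) - 1) * (f n : ℝ)) : ℝ) : ℂ) * (t:ℂ) / (τ:ℂ))) *
           Complex.exp (2 * (Real.pi:ℂ) * Complex.I * (n.val:ℂ) * (m.val:ℂ) / (d:ℂ))) := by ring
      _ = (1 / d : ℂ) * Complex.exp ((r:ℂ) * Complex.I) := by
          rw [hA]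
          congr 1
          push_cast
          rw [div_mul_div_comm, one_mul, hsd]
  have entry : dotProduct (star (Pi.single m (1:ℂ))) ((U t).mulVec (Pi.single 0 1)) =
      ∑ n : Fin d, Complex.exp (-(Complex.I * ((ε n : ℂ)) * (t:ℂ) / (τ:ℂ))) *
        (v n m * (starRingEnd ℂ) (v n 0)) := by
    rw [hU]
    simp [dotProduct, Matrix.mulVec, Pi.single_apply, Matrix.sum_apply,
      Matrix.vecMulVec_apply, Finset.mul_sum, mul_comm, mul_assoc, mul_left_comm]
  rw [entry, Finset.sum_congr rfl (fun n _ => key n), Finset.sum_const]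
  simp only [Finset.card_univ, Fintype.card_fin, nsmul_eq_mul]
  rw [← mul_assoc, mul_one_div, div_self hdC, one_mul, Complex.norm_exp_ofReal_mul_I]
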